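/- A unital ring is semisimple if and only if it is left hereditary and left self-injective. -/

import Mathlib

namespace SSProof

open Filter


variable {R : Type*} [Ring R]

/-- Essential ideal. -/
def Ess (K : Ideal R) : Prop := ∀ C : Ideal R, K ⊓ C = ⊥ → C = ⊥

lemma ess_mono {K K' : Ideal R} (hK : Ess K) (h : K ≤ K') : Ess K' := by
  intro C hC
  refine hK C (le_bot_iff.mp ?_)
  calc K ⊓ C ≤ K' ⊓ C := inf_le_inf_right C h
  _ = ⊥ := hC

/-- Nonsingularity consequence of hereditary: if the left annihilator of `d` is
essential then `d = 0`. -/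
lemma zzero (hproj : ∀ I : Ideal R, Module.Projective R I) {d : R}
    (hd : Ess (LinearMap.ker (LinearMap.toSpanSingleton R R d))) : d = 0 := by
  set rd := LinearMap.toSpanSingleton R R d with hrd
  have : Module.Projective R (LinearMap.range rd) := hproj (LinearMap.range rd)
  obtain ⟨σ, hσ⟩ := Module.projective_lifting_property rd.rangeRestrict LinearMap.id
    rd.surjective_rangeRestrict
  have hker : LinearMap.ker rd ⊓ LinearMap.range σ = ⊥ := by
    rw [eq_bot_iff]
    rintro x ⟨hx1, w, rfl⟩
    have h1 : rd.rangeRestrict (σ w) = w := DFunLike.congr_fun hσ w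
    have h2 : rd.rangeRestrict (σ w) = 0 := by
      ext
      simpa using hx1
    have : w = 0 := by rw [← h1, h2]
    simp [this]
  have hrange : LinearMap.range σ = ⊥ := hd _ hker
  have hall : ∀ w : LinearMap.range rd, w = 0 := by
    intro w
    have h1 : rd.rangeRestrict (σ w) = w := DFunLike.congr_fun hσ w
    have h2 : σ w = 0 := by
      have : σ w ∈ LinearMap.range σ := ⟨w, rfl⟩
      rwa [hrange, Submodule.mem_bot] at this
    rw [h2] at h1
    rw [← h1]
    simp
  have hd' : d ∈ LinearMap.range rd := ⟨1, by simp [hrd]⟩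
  have := hall ⟨d, hd'⟩
  exact Subtype.ext_iff.mp this



/-- The key dual-basis computation. -/
lemma key {V : Ideal R} (s : V →ₗ[R] (V →₀ R))
    (hs : ∀ x : V, Finsupp.linearCombination R id (s x) = x)
    (a : V → R) (ha : ∀ (α : V) (x : V), (s x) α = (x : R) * a α)
    (F : Finset V) (x : V) (hF : (s x).support ⊆ F) :
    (x : R) * (∑ α ∈ F, a α * (α : R)) = (x : R) := by
  have h1 : (x : R) * (∑ α ∈ F, a α * (α : R)) = ∑ α ∈ F, (s x) α * (α : R) := by
    rw [Finset.mul_sum]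
    exact Finset.sum_congr rfl fun α _ => by rw [← mul_assoc, ← ha]
  have h2 : ∑ α ∈ F, (s x) α * (α : R) = ∑ α ∈ (s x).support, (s x) α * (α : R) :=
    (Finset.sum_subset hF (fun α _ hα => by
      rw [Finsupp.notMem_support_iff.mp hα, zero_mul])).symm
  have h3 : ((Finsupp.linearCombination R (id : V → V) (s x) : V) : R)
      = ∑ α ∈ (s x).support, (s x) α * (α : R) := by
    rw [Finsupp.linearCombination_apply, Finsupp.sum]
    push_cast
    exact Finset.sum_congr rfl fun α _ => by simp [smul_eq_mul]
  rw [h1, h2, ← h3, hs]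

/-- A projective ideal over a left self-injective ring has a dual basis by
right multiplications. -/
lemma dual (hBaer : Module.Baer R R) (V : Ideal R) (hproj : Module.Projective R V) :
    ∃ (s : V →ₗ[R] (V →₀ R)) (a : V → R),
      (∀ x : V, Finsupp.linearCombination R id (s x) = x) ∧
      ∀ (α : V) (x : V), (s x) α = (x : R) * a α := by
  obtain ⟨s, hs⟩ := hproj.out
  have hex : ∀ α : V, ∃ aα : R, ∀ x : V, (s x) α = (x : R) * aα := by
    intro α
    obtain ⟨g', hg'⟩ := hBaer V ((Finsupp.lapply α).comp s)
    refine ⟨g' 1, fun x => ?_⟩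
    have h1 := hg' (x : R) x.2
    have h2 : g' ((x : R)) = (x : R) * g' 1 := by
      conv_lhs => rw [show ((x : R)) = (x : R) • (1 : R) by simp]
      rw [map_smul, smul_eq_mul]
    rw [← h2, h1]
    simp
  choose a ha using hex
  exact ⟨s, a, hs, ha⟩

/-- Finitely generated ideals have a right identity inside them. -/
lemma lem_fg (hproj : ∀ I : Ideal R, Module.Projective R I) (hBaer : Module.Baer R R)
    (I : Ideal R) (hI : I.FG) : ∃ e ∈ I, ∀ x ∈ I, x * e = x := by
  classical
  obtain ⟨s, a, hs, ha⟩ := dual hBaer I (hproj I)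
  obtain ⟨G, hG⟩ := hI
  have hGI : ∀ t ∈ G, t ∈ I := fun t ht => hG ▸ Submodule.subset_span ht
  set F : Finset I := G.attach.biUnion
    (fun t => (s ⟨t.1, hGI t.1 t.2⟩).support) with hFdef
  have hsupp : ∀ x : I, (s x).support ⊆ F := by
    intro x
    have hx : (x : R) ∈ Submodule.span R (G : Set R) := hG.ge x.2
    obtain ⟨f, -, hf⟩ := Submodule.mem_span_finset.mp hx
    have hxeq : x = ∑ t ∈ G.attach, f t.1 • (⟨t.1, hGI t.1 t.2⟩ : I) := by
      apply Subtype.ext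
      push_cast
      rw [← hf, ← Finset.sum_attach G (fun t => f t • t)]
    rw [hxeq, map_sum]
    refine (Finsupp.support_finset_sum).trans ?_
    intro α hα
    rw [Finset.mem_biUnion] at hα ⊢
    obtain ⟨t, ht, hαt⟩ := hα
    rw [map_smul] at hαt
    exact ⟨t, ht, Finsupp.support_smul hαt⟩
  refine ⟨∑ α ∈ F, a α * (α : R), ?_, ?_⟩
  · exact Submodule.sum_mem I fun α _ => by
      rw [show a α * (α : R) = a α • (α : R) from rfl]
      exact Submodule.smul_mem I _ α.2
  · intro x hx
    exact key s hs a ha F ⟨x, hx⟩ (hsupp _)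



/-- Every ideal has a complement making an essential sup. -/
lemma exists_compl_ess (A : Ideal R) : ∃ B : Ideal R, A ⊓ B = ⊥ ∧ Ess (A ⊔ B) := by
  have hzorn : ∀ c ⊆ {B : Ideal R | A ⊓ B = ⊥}, IsChain (· ≤ ·) c → ∀ y ∈ c,
      ∃ ub ∈ {B : Ideal R | A ⊓ B = ⊥}, ∀ z ∈ c, z ≤ ub := by
    intro c hcs hchain y hy
    refine ⟨sSup c, ?_, fun z hz => le_sSup hz⟩
    rw [Set.mem_setOf_eq, eq_bot_iff]
    rintro z ⟨hzA, hzS⟩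
    obtain ⟨B', hB'c, hzB'⟩ :=
      (Submodule.mem_sSup_of_directed ⟨y, hy⟩ hchain.directedOn).mp hzS
    have h4 : z ∈ A ⊓ B' := ⟨hzA, hzB'⟩
    rwa [hcs hB'c, Submodule.mem_bot] at h4
  obtain ⟨B, -, hBs0, hBmax⟩ := zorn_le_nonempty₀ {B : Ideal R | A ⊓ B = ⊥} hzorn ⊥ (by simp)
  · have hBs : A ⊓ B = ⊥ := hBs0
    refine ⟨B, hBs, ?_⟩
    intro C hC
    rw [eq_bot_iff]
    intro x hx
    have hB' : A ⊓ (B ⊔ Submodule.span R {x}) = ⊥ := by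
      rw [eq_bot_iff]
      rintro z ⟨hzA, hzB'⟩
      obtain ⟨b, hb, w, hw, rfl⟩ := Submodule.mem_sup.mp hzB'
      obtain ⟨r, rfl⟩ := Submodule.mem_span_singleton.mp hw
      have h0 : r • x = (b + r • x) - b := by abel
      have hwAB : r • x ∈ A ⊔ B := by
        rw [h0]
        exact Submodule.sub_mem _ (Submodule.mem_sup_left hzA) (Submodule.mem_sup_right hb)
      have h1 : r • x ∈ (A ⊔ B) ⊓ C := ⟨hwAB, Submodule.smul_mem C r hx⟩
      rw [hC, Submodule.mem_bot] at h1
      have h2 : b ∈ A ⊓ B := ⟨by rwa [h1, add_zero] at hzA, hb⟩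
      rw [hBs, Submodule.mem_bot] at h2
      rw [Submodule.mem_bot, h2, zero_add]
      exact h1
    have hle : B ⊔ Submodule.span R {x} ≤ B := hBmax hB' le_sup_left
    have hxB : x ∈ B := hle (Submodule.mem_sup_right (Submodule.mem_span_singleton_self x))
    have h3 : x ∈ (A ⊔ B) ⊓ C := ⟨Submodule.mem_sup_right hxB, hx⟩
    rwa [hC, Submodule.mem_bot] at h3

/-- Decomposition of elements in the span of orthogonal idempotents. -/
lemma span_decomp (g : ℕ → R) (hidem : ∀ n, g n * g n = g n)
    (horth : ∀ m n, m ≠ n → g m * g n = 0) {S : Set ℕ} {x : R}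
    (hx : x ∈ Submodule.span R (g '' S)) :
    ∃ F : Finset ℕ, ↑F ⊆ S ∧ (∀ j, j ∉ F → x * g j = 0) ∧ x = ∑ k ∈ F, x * g k := by
  induction hx using Submodule.span_induction with
  | mem y hy =>
    obtain ⟨n, hnS, rfl⟩ := hy
    refine ⟨{n}, by simpa using hnS, ?_, ?_⟩
    · intro j hj
      exact horth n j fun h => hj (by simp [h])
    · simp [hidem n]
  | zero => exact ⟨∅, by simp⟩
  | add y z hy hz ihy ihz =>
    obtain ⟨Fy, hFyS, hFy0, hFySum⟩ := ihy
    obtain ⟨Fz, hFzS, hFz0, hFzSum⟩ := ihz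
    refine ⟨Fy ∪ Fz, ?_, ?_, ?_⟩
    · push_cast
      exact Set.union_subset hFyS hFzS
    · intro j hj
      rw [Finset.mem_union] at hj
      push_neg at hj
      rw [add_mul, hFy0 j hj.1, hFz0 j hj.2, add_zero]
    · have h1 : ∑ k ∈ Fy ∪ Fz, y * g k = y := by
        rw [← Finset.sum_subset Finset.subset_union_left (fun k _ hk => hFy0 k hk)]
        exact hFySum.symm
      have h2 : ∑ k ∈ Fy ∪ Fz, z * g k = z := by
        rw [← Finset.sum_subset Finset.subset_union_right (fun k _ hk => hFz0 k hk)]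
        exact hFzSum.symm
      calc y + z = ∑ k ∈ Fy ∪ Fz, y * g k + ∑ k ∈ Fy ∪ Fz, z * g k := by rw [h1, h2]
      _ = ∑ k ∈ Fy ∪ Fz, (y + z) * g k := by
          rw [← Finset.sum_add_distrib]
          exact Finset.sum_congr rfl fun k _ => (add_mul y z (g k)).symm
  | smul r y hy ihy =>
    obtain ⟨F, hFS, hF0, hFSum⟩ := ihy
    refine ⟨F, hFS, ?_, ?_⟩
    · intro j hj
      rw [smul_eq_mul, mul_assoc, hF0 j hj, mul_zero]
    · rw [smul_eq_mul]
      calc r * y = r * ∑ k ∈ F, y * g k := by rw [← hFSum]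
      _ = ∑ k ∈ F, r * y * g k := by
          rw [Finset.mul_sum]
          exact Finset.sum_congr rfl fun k _ => (mul_assoc r y (g k)).symm

/-- Given two disjoint ideals, there is an element acting (by right multiplication)
as identity on the first and zero on the second. -/
lemma exists_proj (hBaer : Module.Baer R R) {E₁ E₂ : Ideal R} (hdisj : E₁ ⊓ E₂ = ⊥) :
    ∃ c : R, (∀ x ∈ E₁, x * c = x) ∧ (∀ x ∈ E₂, x * c = 0) := by
  set E : Ideal R := E₁ ⊔ E₂ with hE
  set E₂' : Submodule R E := Submodule.comap (Submodule.subtype E) E₂ with hE₂'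
  set q : E →ₗ[R] (E ⧸ E₂') := E₂'.mkQ with hq
  set ι : E₁ →ₗ[R] E := Submodule.inclusion le_sup_left with hι
  have hbij : Function.Bijective (q ∘ₗ ι) := by
    constructor
    · intro u v huv
      simp only [LinearMap.comp_apply, hq, Submodule.mkQ_apply] at huv
      have h1 : ι u - ι v ∈ E₂' := (Submodule.Quotient.eq E₂').mp huv
      have h2 : ((ι u - ι v : E) : R) ∈ E₂ := h1
      have h2' : (u : R) - (v : R) ∈ E₂ := h2
      have h3 : (u : R) - (v : R) ∈ E₁ := Submodule.sub_mem E₁ u.2 v.2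
      have h4 : (u : R) - (v : R) ∈ E₁ ⊓ E₂ := ⟨h3, h2'⟩
      rw [hdisj, Submodule.mem_bot, sub_eq_zero] at h4
      exact Subtype.ext h4
    · intro z
      obtain ⟨y, rfl⟩ := E₂'.mkQ_surjective z
      obtain ⟨u, hu, v, hv, huv⟩ := Submodule.mem_sup.mp y.2
      refine ⟨⟨u, hu⟩, ?_⟩
      show q (ι ⟨u, hu⟩) = q y
      rw [← sub_eq_zero, ← map_sub, hq, Submodule.mkQ_apply, Submodule.Quotient.mk_eq_zero]
      show ((ι ⟨u, hu⟩ - y : E) : R) ∈ E₂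
      have h5 : ((ι ⟨u, hu⟩ - y : E) : R) = u - (y : R) := by
        push_cast
        rfl
      rw [h5, ← huv]
      simpa using Submodule.neg_mem E₂ hv
  set θ := LinearEquiv.ofBijective (q ∘ₗ ι) hbij with hθ
  set ψ : E →ₗ[R] R := E₁.subtype ∘ₗ (θ.symm : (E ⧸ E₂') →ₗ[R] E₁) ∘ₗ q with hψ
  obtain ⟨g', hg'⟩ := hBaer E ψ
  refine ⟨g' 1, ?_, ?_⟩
  · intro x hx
    have hxE : x ∈ E := Submodule.mem_sup_left hx
    have h1 : x * g' 1 = g' x := by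
      conv_rhs => rw [show x = x • (1 : R) by simp]
      rw [map_smul, smul_eq_mul]
    rw [h1, hg' x hxE]
    show (((θ.symm (q ⟨x, hxE⟩)) : E₁) : R) = x
    have h2 : q ⟨x, hxE⟩ = θ ⟨x, hx⟩ := by
      rw [hθ, LinearEquiv.ofBijective_apply]
      rfl
    rw [h2, LinearEquiv.symm_apply_apply]
  · intro x hx
    have hxE : x ∈ E := Submodule.mem_sup_right hx
    have h1 : x * g' 1 = g' x := by
      conv_rhs => rw [show x = x • (1 : R) by simp]
      rw [map_smul, smul_eq_mul]
    rw [h1, hg' x hxE]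
    show (((θ.symm (q ⟨x, hxE⟩)) : E₁) : R) = 0
    have h2 : q ⟨x, hxE⟩ = 0 := by
      rw [hq, Submodule.mkQ_apply, Submodule.Quotient.mk_eq_zero]
      show (((⟨x, hxE⟩ : E) : R)) ∈ E₂
      exact hx
    rw [h2, map_zero]
    rfl



/-- The ultrafilter combinatorial lemma. -/
lemma combinatorial {X : Type*} (φ : ℕ → Finset X) (U : Ultrafilter ℕ)
    (h : ∀ T : Set ℕ, T ∉ U → (⋃ n ∈ T, (φ n : Set X)).Finite) :
    (⋃ n, (φ n : Set X)).Finite := by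
  classical
  by_contra hinf
  set s : Set ℕ := {n | ¬ (φ n : Set X) ⊆ ⋃ m ∈ Set.Iio n, (φ m : Set X)} with hs
  -- s is infinite
  have hsinf : s.Infinite := by
    intro hfin
    obtain ⟨N, hN⟩ : ∃ N, ∀ n ∈ s, n < N := by
      obtain ⟨N, hN⟩ := hfin.bddAbove
      exact ⟨N + 1, fun n hn => Nat.lt_succ_of_le (hN hn)⟩
    have hsub : ∀ n, (φ n : Set X) ⊆ ⋃ m ∈ Set.Iio N, (φ m : Set X) := by
      intro n
      induction n using Nat.strong_induction_on with
      | _ n ih =>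
        by_cases hns : n ∈ s
        · exact Set.subset_biUnion_of_mem (s := Set.Iio N) (u := fun m => (φ m : Set X)) (show n ∈ Set.Iio N from hN n hns)
        · have h1 : (φ n : Set X) ⊆ ⋃ m ∈ Set.Iio n, (φ m : Set X) := not_not.mp hns
          exact h1.trans (Set.iUnion₂_subset fun m hm => ih m hm)
    refine hinf ?_
    refine Set.Finite.subset (Set.Finite.biUnion (Set.finite_Iio N)
      (fun m _ => (φ m).finite_toSet)) ?_
    exact Set.iUnion_subset hsub
  -- witnesses of novelty
  have hwit : ∀ n ∈ s, ∃ x, x ∈ (φ n : Set X) ∧ x ∉ ⋃ m ∈ Set.Iio n, (φ m : Set X) := by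
    intro n hn
    exact Set.not_subset.mp hn
  choose w hw1 hw2 using hwit
  -- the general claim
  have claim : ∀ t : Set ℕ, t ⊆ s → t.Infinite → t ∉ U → False := by
    intro t hts htinf htU
    have hfin := h t htU
    have hinj : Function.Injective fun n : t => w n (hts n.2) := by
      rintro ⟨n, hn⟩ ⟨n', hn'⟩ hnn'
      simp only at hnn'
      by_contra hne
      have hne' : n ≠ n' := fun hh => hne (by simpa using hh)
      rcases hne'.lt_or_gt with hlt | hlt
      · exact hw2 n' (hts hn') (Set.subset_biUnion_of_mem (show n ∈ Set.Iio n' from hlt)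
          (by rw [← hnn']; exact hw1 n (hts hn)))
      · exact hw2 n (hts hn) (Set.subset_biUnion_of_mem (show n' ∈ Set.Iio n from hlt)
          (by rw [hnn']; exact hw1 n' (hts hn')))
    have hmem : ∀ n : t, w n (hts n.2) ∈ ⋃ m ∈ t, (φ m : Set X) :=
      fun n => Set.subset_biUnion_of_mem n.2 (hw1 n (hts n.2))
    have : Infinite t := htinf.to_subtype
    exact (Set.not_infinite.mpr hfin) (Set.infinite_of_injective_forall_mem hinj hmem)
  -- split s into two disjoint infinite subsets
  set E := hsinf.natEmbedding
  set s₁ : Set ℕ := Set.range fun k => ((E (2 * k) : s) : ℕ) with hs₁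
  set s₂ : Set ℕ := Set.range fun k => ((E (2 * k + 1) : s) : ℕ) with hs₂
  have hcoeinj : Function.Injective fun k : ℕ => ((E k : s) : ℕ) :=
    fun a b hab => E.injective (Subtype.ext hab)
  have hs₁s : s₁ ⊆ s := by rintro _ ⟨k, rfl⟩; exact (E (2 * k)).2
  have hs₂s : s₂ ⊆ s := by rintro _ ⟨k, rfl⟩; exact (E (2 * k + 1)).2
  have hs₁inf : s₁.Infinite := Set.infinite_range_of_injective
    (fun a b hab => by have := hcoeinj hab; omega)
  have hs₂inf : s₂.Infinite := Set.infinite_range_of_injective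
    (fun a b hab => by have := hcoeinj hab; omega)
  have hdisj : s₁ ∩ s₂ = ∅ := by
    rw [Set.eq_empty_iff_forall_notMem]
    rintro x ⟨⟨k, hk⟩, ⟨j, hj⟩⟩
    have : 2 * k = 2 * j + 1 := hcoeinj (hk.trans hj.symm)
    omega
  have hnotboth : s₁ ∉ U ∨ s₂ ∉ U := by
    by_contra hc
    push_neg at hc
    have h5 : s₁ ∩ s₂ ∈ U := Filter.inter_mem hc.1 hc.2
    rw [hdisj] at h5
    exact Ultrafilter.empty_notMem h5
  rcases hnotboth with h6 | h6
  · exact claim s₁ hs₁s hs₁inf h6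
  · exact claim s₂ hs₂s hs₂inf h6




/-- There is no infinite family of orthogonal nonzero idempotents. -/
lemma no_orth (hproj : ∀ I : Ideal R, Module.Projective R I) (hBaer : Module.Baer R R)
    (g : ℕ → R) (h0 : ∀ n, g n ≠ 0) (hidem : ∀ n, g n * g n = g n)
    (horth : ∀ m n, m ≠ n → g m * g n = 0) : False := by
  classical
  set A : Ideal R := Submodule.span R (Set.range g) with hA
  obtain ⟨B, hAB, hEss⟩ := exists_compl_ess A
  have hccEx : ∀ T : Set ℕ, ∃ c : R,
      (∀ n, n ∈ T → g n * c = g n) ∧ (∀ n, n ∉ T → g n * c = 0) ∧ (∀ b ∈ B, b * c = 0) := by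
    intro T
    have hdisj : Submodule.span R (g '' T) ⊓ (Submodule.span R (g '' Tᶜ) ⊔ B) = ⊥ := by
      rw [eq_bot_iff]
      rintro x ⟨hx1, hx2⟩
      obtain ⟨y, hy, b, hb, rfl⟩ := Submodule.mem_sup.mp hx2
      have hyA : y ∈ A := Submodule.span_mono (Set.image_subset_range g Tᶜ) hy
      have hxA : y + b ∈ A := Submodule.span_mono (Set.image_subset_range g T) hx1
      have hbA : b ∈ A := by
        have hb' : b = (y + b) - y := by abel
        rw [hb']
        exact Submodule.sub_mem A hxA hyA
      have hb0 : b = 0 := by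
        have h6 : b ∈ A ⊓ B := ⟨hbA, hb⟩
        rwa [hAB, Submodule.mem_bot] at h6
      rw [hb0, add_zero] at hx1 ⊢
      obtain ⟨F, hFS, hF0, hFsum⟩ := span_decomp g hidem horth hx1
      obtain ⟨F', hF'S, hF'0, -⟩ := span_decomp g hidem horth hy
      rw [Submodule.mem_bot, hFsum]
      refine Finset.sum_eq_zero fun k hk => ?_
      have hkT : k ∈ T := hFS hk
      have hknF' : k ∉ F' := fun hc => (hF'S hc) hkT
      exact hF'0 k hknF'
    obtain ⟨c, hc1, hc2⟩ := exists_proj hBaer hdisj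
    refine ⟨c, ?_, ?_, ?_⟩
    · intro n hn
      exact hc1 _ (Submodule.subset_span ⟨n, hn, rfl⟩)
    · intro n hn
      exact hc2 _ (Submodule.mem_sup_left (Submodule.subset_span ⟨n, hn, rfl⟩))
    · intro b hb
      exact hc2 _ (Submodule.mem_sup_right hb)
  choose cc hcc1 hcc0 hccB using hccEx
  have uniq : ∀ d : R, (∀ n, g n * d = 0) → (∀ b ∈ B, b * d = 0) → d = 0 := by
    intro d h1 h2
    refine zzero hproj (ess_mono hEss ?_)
    rw [sup_le_iff]
    constructor
    · rw [hA, Submodule.span_le]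
      rintro _ ⟨n, rfl⟩
      rw [SetLike.mem_coe, LinearMap.mem_ker, LinearMap.toSpanSingleton_apply, smul_eq_mul]
      exact h1 n
    · intro b hb
      rw [LinearMap.mem_ker, LinearMap.toSpanSingleton_apply, smul_eq_mul]
      exact h2 b hb
  have hmulc : ∀ S T : Set ℕ, cc S * cc T = cc (S ∩ T) := by
    intro S T
    have h3 : cc S * cc T - cc (S ∩ T) = 0 := by
      refine uniq _ (fun n => ?_) (fun b hb => ?_)
      · rw [mul_sub, ← mul_assoc]
        by_cases hnS : n ∈ S
        · rw [hcc1 S n hnS]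
          by_cases hnT : n ∈ T
          · rw [hcc1 T n hnT, hcc1 (S ∩ T) n ⟨hnS, hnT⟩, sub_self]
          · rw [hcc0 T n hnT, hcc0 (S ∩ T) n (fun hc => hnT hc.2), sub_self]
        · rw [hcc0 S n hnS, zero_mul, hcc0 (S ∩ T) n (fun hc => hnS hc.1), sub_self]
      · rw [mul_sub, ← mul_assoc, hccB S b hb, zero_mul, hccB (S ∩ T) b hb, sub_self]
    exact sub_eq_zero.mp h3
  set U := Filter.hyperfilter ℕ with hU
  set 𝒯 : Set (Set ℕ) := {T : Set ℕ | T ∉ U} with h𝒯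
  set W : Ideal R := Submodule.span R (cc '' 𝒯) with hW
  set V : Ideal R := A ⊔ W with hV
  have hgV : ∀ n, g n ∈ V := fun n =>
    Submodule.mem_sup_left (Submodule.subset_span ⟨n, rfl⟩)
  have hcV : ∀ T ∈ 𝒯, cc T ∈ V := fun T hT =>
    Submodule.mem_sup_right (Submodule.subset_span ⟨T, hT, rfl⟩)
  obtain ⟨s, a, hs, ha⟩ := dual hBaer V (hproj V)
  set φ : ℕ → Finset V := fun n => (s ⟨g n, hgV n⟩).support with hφ
  have hstar : ∀ T : Set ℕ, T ∉ U → (⋃ n ∈ T, (φ n : Set V)).Finite := by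
    intro T hT
    refine Set.Finite.subset (Finset.finite_toSet (s ⟨cc T, hcV T hT⟩).support) ?_
    intro α hα
    simp only [Set.mem_iUnion] at hα
    obtain ⟨n, hnT, hαn⟩ := hα
    rw [Finset.mem_coe, Finsupp.mem_support_iff] at hαn ⊢
    intro hc
    apply hαn
    rw [ha] at hc ⊢
    show g n * a α = 0
    calc g n * a α = (g n * cc T) * a α := by rw [hcc1 T n hnT]
    _ = g n * (cc T * a α) := by rw [mul_assoc]
    _ = 0 := by rw [show cc T * a α = 0 from hc, mul_zero]
  have hfin : (⋃ n, (φ n : Set V)).Finite := combinatorial φ U hstar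
  set F : Finset V := hfin.toFinset with hF
  have hFsup : ∀ n, (s ⟨g n, hgV n⟩).support ⊆ F := by
    intro n α hα
    rw [hF, Set.Finite.mem_toFinset]
    exact Set.mem_iUnion.mpr ⟨n, Finset.mem_coe.mpr hα⟩
  set e : R := ∑ α ∈ F, a α * (α : R) with he
  have heV : e ∈ V := Submodule.sum_mem V fun α _ => by
    rw [show a α * (α : R) = a α • (α : R) from rfl]
    exact Submodule.smul_mem V _ α.2
  have hge : ∀ n, g n * e = g n := fun n => key s hs a ha F ⟨g n, hgV n⟩ (hFsup n)
  obtain ⟨aa, haa, w, hw, hesum⟩ := Submodule.mem_sup.mp heV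
  obtain ⟨l, hlsupp, hlsum⟩ := Submodule.mem_span_set.mp hw
  have hlsum' : ∑ m ∈ l.support, l m • m = w := hlsum
  have hTex' : ∀ m : R, ∃ T : Set ℕ, m ∈ cc '' 𝒯 → (T ∈ 𝒯 ∧ cc T = m) := by
    intro m
    by_cases hm : m ∈ cc '' 𝒯
    · obtain ⟨T, hT, hTm⟩ := hm
      exact ⟨T, fun _ => ⟨hT, hTm⟩⟩
    · exact ⟨∅, fun hcm => absurd hcm hm⟩
  choose T' hT' using hTex'
  set Tstar : Set ℕ := ⋃ m ∈ (l.support : Set R), T' m with hTstar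
  have hTstarU : Tstar ∉ U := by
    intro hmem
    rw [hTstar] at hmem
    obtain ⟨m, hm, hTm⟩ :=
      (Ultrafilter.finite_biUnion_mem_iff (l.support.finite_toSet)).mp hmem
    exact (hT' m (hlsupp hm)).1 hTm
  have hTsub : ∀ m ∈ l.support, T' m ⊆ Tstar := fun m hm =>
    Set.subset_biUnion_of_mem (s := (l.support : Set R)) (u := T') hm
  have hwcc : w * cc Tstar = w := by
    rw [← hlsum', Finset.sum_mul]
    refine Finset.sum_congr rfl fun m hm => ?_
    rw [smul_eq_mul, mul_assoc]
    congr 1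
    have h7 := hT' m (hlsupp hm)
    rw [← h7.2, hmulc, Set.inter_eq_left.mpr (hTsub m hm)]
  have hkey : e - e * cc Tstar = aa - aa * cc Tstar := by
    rw [← hesum, add_mul, hwcc]
    abel
  have haa' : aa ∈ Submodule.span R (g '' Set.univ) := by rwa [Set.image_univ]
  obtain ⟨Fa, -, -, hFaSum⟩ := span_decomp g hidem horth haa'
  have hcompl : Tstarᶜ ∈ U := Ultrafilter.compl_mem_iff_notMem.mpr hTstarU
  have hinfc : Tstarᶜ.Infinite := by
    intro hfin2
    rw [hU] at hcompl
    exact Set.Finite.notMem_hyperfilter hfin2 hcompl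
  obtain ⟨n, hn⟩ := (hinfc.diff (Fa.finite_toSet)).nonempty
  have hn1 : n ∉ Tstar := hn.1
  have hn2 : n ∉ Fa := hn.2
  have h8 : g n * (e - e * cc Tstar) = g n := by
    rw [mul_sub, ← mul_assoc, hge n, hcc0 Tstar n hn1, sub_zero]
  have way1 : g n * (e - e * cc Tstar) * g n = g n := by
    rw [h8, hidem n]
  have hd2 : aa - aa * cc Tstar = ∑ k ∈ Fa, (aa * g k - aa * g k * cc Tstar) := by
    rw [Finset.sum_sub_distrib, ← Finset.sum_mul, ← hFaSum]
  have way2 : g n * (e - e * cc Tstar) * g n = 0 := by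
    rw [hkey, hd2, Finset.mul_sum, Finset.sum_mul]
    refine Finset.sum_eq_zero fun k hk => ?_
    have hkn : k ≠ n := fun hc => hn2 (hc ▸ hk)
    rw [mul_sub, sub_mul]
    have hX : g n * (aa * g k) * g n = 0 := by
      rw [mul_assoc, mul_assoc, horth k n hkn, mul_zero, mul_zero]
    have hY : g n * (aa * g k * cc Tstar) * g n = 0 := by
      by_cases hkT : k ∈ Tstar
      · have h9 : aa * g k * cc Tstar = aa * g k := by
          rw [mul_assoc, hcc1 Tstar k hkT]
        rw [h9]
        exact hX
      · have h9 : aa * g k * cc Tstar = 0 := by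
          rw [mul_assoc, hcc0 Tstar k hkT, mul_zero]
        rw [h9, mul_zero, zero_mul]
    rw [hX, hY, sub_zero]
  exact h0 n (by rw [← way1, way2])



/-- Every left ideal is finitely generated. -/
lemma fg_all (hproj : ∀ I : Ideal R, Module.Projective R I) (hBaer : Module.Baer R R)
    (K : Ideal R) : K.FG := by
  classical
  by_contra hK
  have step : ∀ p : {J : Ideal R // J.FG ∧ J ≤ K},
      ∃ J' : Ideal R, (J'.FG ∧ J' ≤ K) ∧ p.1 ≤ J' ∧ ¬J' ≤ p.1 := by
    rintro ⟨J, hfg, hle⟩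
    have hKJ : ¬K ≤ J := fun h => hK (le_antisymm hle h ▸ hfg)
    obtain ⟨x, hxK, hxJ⟩ := SetLike.not_le_iff_exists.mp hKJ
    refine ⟨J ⊔ Submodule.span R {x}, ⟨Submodule.FG.sup hfg (Submodule.fg_span_singleton x),
      sup_le hle (by rwa [Submodule.span_singleton_le_iff_mem])⟩, le_sup_left, fun h => hxJ ?_⟩
    exact h (Submodule.mem_sup_right (Submodule.mem_span_singleton_self x))
  choose nxt hnxt1 hnxt2 hnxt3 using step
  let seq : ℕ → {J : Ideal R // J.FG ∧ J ≤ K} := fun n =>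
    Nat.rec ⟨⊥, Submodule.fg_bot, bot_le⟩ (fun _ p => ⟨nxt p, hnxt1 p⟩) n
  set I : ℕ → Ideal R := fun n => (seq n).1 with hI
  have hfgI : ∀ n, (I n).FG := fun n => (seq n).2.1
  have hstep1 : ∀ n, I n ≤ I (n + 1) := fun n => hnxt2 (seq n)
  have hstep2 : ∀ n, ¬I (n + 1) ≤ I n := fun n => hnxt3 (seq n)
  have hmono : Monotone I := monotone_nat_of_le_succ hstep1
  choose e he1 he2 using fun n => lem_fg hproj hBaer (I n) (hfgI n)
  have hee : ∀ n, e n * e n = e n := fun n => he2 n (e n) (he1 n)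
  -- the auxiliary idempotents
  obtain ⟨f, hfdef⟩ : ∃ f : ℕ → R, ∀ n, f n = e (n + 1) * (1 - e n) := ⟨_, fun _ => rfl⟩
  have hfeq : ∀ n, f n = e (n + 1) - e (n + 1) * e n := fun n => by
    rw [hfdef]
    noncomm_ring
  have hmem_f : ∀ n, f n ∈ I (n + 1) := by
    intro n
    rw [hfeq]
    refine Submodule.sub_mem _ (he1 (n + 1)) ?_
    have : e (n + 1) * e n = e (n + 1) • e n := rfl
    rw [this]
    exact hmono (Nat.le_succ n) (Submodule.smul_mem _ _ (he1 n))
  have hIdown : ∀ n, ∀ z : R, ∀ x ∈ I n, z * x ∈ I n := by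
    intro n z x hx
    have : z * x = z • x := rfl
    rw [this]
    exact Submodule.smul_mem _ _ hx
  have hf_em : ∀ j m, j + 1 ≤ m → f j * e m = f j := fun j m h =>
    he2 m (f j) (hmono h (hmem_f j))
  have hfe : ∀ n, f n * e n = 0 := by
    intro n
    rw [hfdef, mul_assoc, sub_mul, one_mul, hee, sub_self, mul_zero]
  have hff : ∀ j k, j < k → f j * f k = 0 := by
    intro j k h
    have h1 : f j * f k = f j * e (k + 1) - f j * e (k + 1) * e k := by
      rw [hfdef k]
      noncomm_ring
    rw [h1, hf_em j (k + 1) (by omega), hf_em j k h, sub_self]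
  have hff_self : ∀ k, f k * f k = f k := by
    intro k
    have h1 : f k * f k = f k * e (k + 1) * (1 - e k) := by
      rw [hfdef]
      noncomm_ring
    rw [h1, hf_em k (k + 1) le_rfl, mul_sub, mul_one, hfe, sub_zero]
  have hIstep : ∀ k, e (k + 1) ∈ I k → False := by
    intro k hk
    refine hstep2 k fun x hx => ?_
    rw [← he2 (k + 1) x hx]
    exact hIdown k x _ hk
  -- the partial products
  obtain ⟨p, hp0, hpsucc⟩ : ∃ p : ℕ → R, p 0 = 1 ∧ ∀ n, p (n + 1) = (1 - f n) * p n :=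
    ⟨fun n => Nat.rec 1 (fun k pk => (1 - f k) * pk) n, rfl, fun _ => rfl⟩
  have hpf : ∀ k j, k ≤ j → p k * f j = f j := by
    intro k
    induction k with
    | zero => intro j _; rw [hp0, one_mul]
    | succ k ih =>
      intro j hj
      rw [hpsucc, mul_assoc, ih j (by omega), sub_mul, one_mul, hff k j (by omega), sub_zero]
  have hqI : ∀ k, 1 - p k ∈ I k := by
    intro k
    induction k with
    | zero => simp [hp0]
    | succ k ih =>
      have h1 : 1 - p (k + 1) = (1 - p k) + (f k - f k * (1 - p k)) := by
        rw [hpsucc]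
        noncomm_ring
      rw [h1]
      refine Submodule.add_mem _ (hmono (Nat.le_succ k) ih) ?_
      refine Submodule.sub_mem _ (hmem_f k) ?_
      exact hmono (Nat.le_succ k) (hIdown k (f k) _ ih)
  obtain ⟨gg, hggdef⟩ : ∃ gg : ℕ → R, ∀ n, gg n = f n * p n := ⟨_, fun _ => rfl⟩
  have hggI : ∀ k, gg k - f k ∈ I k := by
    intro k
    have h1 : gg k - f k = -(f k * (1 - p k)) := by
      rw [hggdef]
      noncomm_ring
    rw [h1]
    exact Submodule.neg_mem _ (hIdown k (f k) _ (hqI k))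
  have hgg_ne : ∀ k, gg k ≠ 0 := by
    intro k h
    have h1 : f k ∈ I k := by
      have h2 := hggI k
      rw [h, zero_sub] at h2
      simpa using Submodule.neg_mem _ h2
    refine hIstep k ?_
    have h3 : e (k + 1) = e (k + 1) * e k + f k := by rw [hfeq]; noncomm_ring
    rw [h3]
    refine Submodule.add_mem _ (hIdown k (e (k + 1)) _ (he1 k)) h1
  have hgg_self : ∀ k, gg k * gg k = gg k := by
    intro k
    rw [hggdef]
    calc f k * p k * (f k * p k) = f k * (p k * f k) * p k := by noncomm_ring
    _ = f k * f k * p k := by rw [hpf k k le_rfl]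
    _ = f k * p k := by rw [hff_self]
  have hpg : ∀ m n, n < m → p m * gg n = 0 := by
    intro m
    induction m with
    | zero => intro n hn; omega
    | succ m ih =>
      intro n hn
      rcases Nat.lt_or_ge n m with h | h
      · rw [hpsucc, mul_assoc, ih n h, mul_zero]
      · have hnm : n = m := by omega
        subst hnm
        rw [hpsucc, hggdef, mul_assoc, ← mul_assoc (p n), hpf n n le_rfl, sub_mul, one_mul,
          ← mul_assoc, hff_self, sub_self]
  have hgg_orth : ∀ m n, m ≠ n → gg m * gg n = 0 := by
    intro m n hmn
    rcases hmn.lt_or_gt with h | h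
    · rw [hggdef m, hggdef n]
      calc f m * p m * (f n * p n) = f m * (p m * f n) * p n := by noncomm_ring
      _ = f m * f n * p n := by rw [hpf m n (le_of_lt h)]
      _ = 0 := by rw [hff m n h, zero_mul]
    · have h2 : gg m * gg n = f m * (p m * gg n) := by
        rw [hggdef m, mul_assoc]
      rw [h2, hpg m n h, mul_zero]
  exact no_orth hproj hBaer gg hgg_ne hgg_self hgg_orth



lemma reverse (hproj : ∀ I : Ideal R, Module.Projective R I) (hBaer : Module.Baer R R) :
    IsSemisimpleRing R := by
  refine { toComplementedLattice := ⟨fun I => ?_⟩ }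
  obtain ⟨e, heI, he⟩ := lem_fg hproj hBaer I (fg_all hproj hBaer I)
  have hee : e * e = e := he e heI
  refine ⟨Submodule.span R {1 - e}, ?_, ?_⟩
  · rw [disjoint_iff, eq_bot_iff]
    rintro x ⟨hxI, hxJ⟩
    obtain ⟨r, hr⟩ := Submodule.mem_span_singleton.mp hxJ
    rw [Submodule.mem_bot]
    have h1 : x * e = x := he x hxI
    rw [← h1, ← hr, smul_eq_mul, mul_sub, mul_one, sub_mul, mul_assoc, hee, sub_self]
  · rw [codisjoint_iff, eq_top_iff]
    intro x _
    have h2 : x = x * e + x * (1 - e) := by noncomm_ring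
    rw [h2]
    refine Submodule.add_mem _ ?_ ?_
    · exact Submodule.mem_sup_left (Submodule.smul_mem I x heI)
    · exact Submodule.mem_sup_right (Submodule.smul_mem _ x (Submodule.mem_span_singleton_self _))

lemma forward [IsSemisimpleRing R] :
    (∀ I : Ideal R, Module.Projective R I) ∧ Module.Injective R R := by
  constructor
  · intro I
    obtain ⟨J, hJ⟩ := exists_isCompl I
    exact Module.Projective.of_split I.subtype (Submodule.linearProjOfIsCompl I J hJ)
      (LinearMap.ext fun x => Submodule.linearProjOfIsCompl_apply_left hJ x)
  · refine Module.Baer.injective ?_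
    intro I gI
    obtain ⟨J, hJ⟩ := exists_isCompl I
    refine ⟨gI ∘ₗ Submodule.linearProjOfIsCompl I J hJ, fun x hx => ?_⟩
    have h1 : Submodule.linearProjOfIsCompl I J hJ x = ⟨x, hx⟩ :=
      Submodule.linearProjOfIsCompl_apply_left hJ ⟨x, hx⟩
    simp [h1]


end SSProof

theorem stmt_2 (R : Type*) [Ring R] :
    IsSemisimpleRing R ↔
      ((∀ I : Ideal R, Module.Projective R I) ∧ Module.Injective R R) := by
  constructor
  · intro h
    exact SSProof.forward
  · rintro ⟨h1, h2⟩
    exact SSProof.reverse h1 (Module.Baer.of_injective h2)
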